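/- Components of the smooth iterated tangent map: if f : X → Y is C^k between real finite-dimensional vector spaces, then the component of T^k(f)(⟨⟨x; u⟩⟩) at multi-index α ∈ {0,1}^k equals D_u^α f(x), where ⟨⟨x; u⟩⟩ ∈ T^k(X) is the k-cuboid with base point x, component u_i at the i-th basis multi-index, and 0 at all multi-indices of order ≥ 2, and the iterated tangent functor is defined by T(f)(x,u) = (f(x), D_u f(x)), T^k = T ∘ T^{k−1}, identifying T^k(X) with cuboids (u_α)_{α ∈ {0,1}^k}. -/

import Mathlib

/-- Iterated directional derivative `D_u^α` for a multi-index `α ∈ {0,1}^k`. -/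
noncomputable def dIter {Z Y : Type*} [NormedAddCommGroup Z] [NormedSpace ℝ Z]
    [NormedAddCommGroup Y] [NormedSpace ℝ Y] :
    (k : ℕ) → (Fin k → Z) → (Fin k → Bool) → (Z → Y) → (Z → Y)
  | 0, _, _, f => f
  | k + 1, u, α, f =>
    let rest := dIter k (fun i => u i.succ) (fun i => α i.succ) f
    if α 0 then (fun x => fderiv ℝ rest x (u 0)) else rest

/-- The pairing of two `k`-cuboids into a `(k+1)`-cuboid, splitting along the last
coordinate of the discrete cube. -/
def pairCub {X : Type*} {k : ℕ} (u v : (Fin k → Bool) → X) : (Fin (k + 1) → Bool) → X :=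
  fun α => if α (Fin.last k) then v (α ∘ Fin.castSucc) else u (α ∘ Fin.castSucc)

/-- The iterated (smooth) tangent map `T^k(f)`, identifying `T^k(X)` with `k`-cuboids:
`T^0(f) = f` and `T^{k+1}(f) = T(T^k(f))` where `T(F)(x,u) = (F(x), DF(x)u)`. -/
noncomputable def Tsm {X Y : Type*} [NormedAddCommGroup X] [NormedSpace ℝ X]
    [NormedAddCommGroup Y] [NormedSpace ℝ Y] :
    (k : ℕ) → (X → Y) → (((Fin k → Bool) → X) → ((Fin k → Bool) → Y))
  | 0, f => fun w α => f (w α)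
  | k + 1, f => fun w =>
      pairCub (Tsm k f (fun α => w (Fin.snoc α false)))
        (fderiv ℝ (Tsm k f) (fun α => w (Fin.snoc α false)) (fun α => w (Fin.snoc α true)))

/-- The `k`-cuboid `⟨⟨x; u⟩⟩`: base point `x`, component `uᵢ` at the `i`-th basis
multi-index, and `0` at all multi-indices of order `≥ 2`. -/
def angleCub {X : Type*} [AddCommGroup X] {k : ℕ} (x : X) (u : Fin k → X) :
    (Fin k → Bool) → X :=
  fun α => (if ∀ j, α j = false then x else 0)
    + ∑ i, if α = (fun j => decide (j = i)) then u i else 0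

section helpers

variable {Z Y : Type*} [NormedAddCommGroup Z] [NormedSpace ℝ Z]
    [NormedAddCommGroup Y] [NormedSpace ℝ Y]

lemma dIter_succ (k : ℕ) (u : Fin (k+1) → Z) (α : Fin (k+1) → Bool) (f : Z → Y) :
    dIter (k+1) u α f =
      if α 0 then
        (fun x => fderiv ℝ (dIter k (fun i => u i.succ) (fun i => α i.succ) f) x (u 0))
      else dIter k (fun i => u i.succ) (fun i => α i.succ) f := rfl

/-- `dIter` with the last index stripped. -/
lemma dIter_succ_last :
    ∀ (k : ℕ) (u : Fin (k+1) → Z) (α : Fin (k+1) → Bool) (f : Z → Y) (x : Z),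
    dIter (k+1) u α f x =
      dIter k (fun i => u i.castSucc) (fun i => α i.castSucc)
        (if α (Fin.last k) then (fun y => fderiv ℝ f y (u (Fin.last k))) else f) x
  | 0, u, α, f, x => by
    cases h : α 0 <;>
      simp [dIter, show Fin.last 0 = 0 from rfl, h]
  | k+1, u, α, f, x => by
    have hrest : (dIter (k+1) (fun i => u i.succ) (fun i => α i.succ) f : Z → Y)
        = dIter k (fun i => (fun j => u j.castSucc) i.succ) (fun i => (fun j => α j.castSucc) i.succ)
            (if α (Fin.last (k+1)) then (fun y => fderiv ℝ f y (u (Fin.last (k+1)))) else f) := by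
      funext x'
      rw [dIter_succ_last k (fun i => u i.succ) (fun i => α i.succ) f x']
      simp [Fin.succ_last]
    rw [dIter_succ (k+1) u α f, dIter_succ k (fun i => u i.castSucc) (fun i => α i.castSucc),
      hrest]
    cases h : α 0 <;> simp [h, Fin.castSucc_zero]

lemma contDiff_dfd {n : ℕ} {f : Z → Y} (hf : ContDiff ℝ ((n+1 : ℕ) : ℕ∞) f) (v : Z) :
    ContDiff ℝ (n : ℕ) (fun y => fderiv ℝ f y v) :=
  (hf.fderiv_right (by exact_mod_cast le_rfl)).clm_apply contDiff_const

lemma fderiv_eval {ι : Type*} [Fintype ι] {F : Z → ι → Y} {w : Z}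
    (hF : DifferentiableAt ℝ F w) (i : ι) (v : Z) :
    fderiv ℝ (fun w => F w i) w v = fderiv ℝ F w v i := by
  set P := ContinuousLinearMap.proj (R := ℝ) (φ := fun _ : ι => Y) i with hP
  have h0 := P.hasFDerivAt.comp w hF.hasFDerivAt
  have h : HasFDerivAt (fun w => F w i) (P.comp (fderiv ℝ F w)) w := h0
  rw [h.fderiv]; rfl

lemma schwarz {f : Z → Y} (hf : ContDiff ℝ ((2:ℕ) : ℕ∞) f) (x v z : Z) :
    fderiv ℝ (fun y => fderiv ℝ f y v) x z = fderiv ℝ (fun y => fderiv ℝ f y z) x v := by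
  have hd : DifferentiableAt ℝ (fderiv ℝ f) x :=
    ((hf.fderiv_right (m := 1) (by exact_mod_cast le_rfl)).differentiable
      one_ne_zero).differentiableAt
  have key : ∀ a : Z, fderiv ℝ (fun y => fderiv ℝ f y a) x
      = (ContinuousLinearMap.apply ℝ Y a).comp (fderiv ℝ (fderiv ℝ f) x) := by
    intro a
    have h : HasFDerivAt (fun y => fderiv ℝ f y a)
        ((ContinuousLinearMap.apply ℝ Y a).comp (fderiv ℝ (fderiv ℝ f) x)) x :=
      (ContinuousLinearMap.apply ℝ Y a).hasFDerivAt.comp x hd.hasFDerivAt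
    exact h.fderiv
  rw [key v, key z]
  exact (hf.contDiffAt.isSymmSndFDerivAt (by simp [minSmoothness_of_isRCLikeNormedField])) z v

/-- Directional derivatives commute past `dIter`. -/
lemma dIter_comm :
    ∀ (k : ℕ) (u : Fin k → Z) (β : Fin k → Bool) (f : Z → Y),
      ContDiff ℝ ((k+1 : ℕ) : ℕ∞) f →
      ∀ x z, fderiv ℝ (dIter k u β f) x z = dIter k u β (fun y => fderiv ℝ f y z) x
  | 0, u, β, f, hf, x, z => rfl
  | k+1, u, β, f, hf, x, z => by
    have hf1 : ContDiff ℝ ((k+1:ℕ):ℕ∞) f :=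
      hf.of_le (by exact_mod_cast Nat.le_succ (k+1))
    cases h : β 0 with
    | false =>
      have e1 : dIter (k+1) u β f = dIter k (fun i => u i.succ) (fun i => β i.succ) f := by
        rw [dIter_succ]; simp [h]
      have e2 : dIter (k+1) u β (fun y => fderiv ℝ f y z)
          = dIter k (fun i => u i.succ) (fun i => β i.succ) (fun y => fderiv ℝ f y z) := by
        rw [dIter_succ]; simp [h]
      rw [e1, e2, dIter_comm k _ _ f hf1]
    | true =>
      have hfu : ContDiff ℝ ((k+1:ℕ):ℕ∞) (fun y => fderiv ℝ f y (u 0)) :=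
        contDiff_dfd hf (u 0)
      have hfz : ContDiff ℝ ((k+1:ℕ):ℕ∞) (fun y => fderiv ℝ f y z) :=
        contDiff_dfd hf z
      have e1 : dIter (k+1) u β f
          = fun x' => fderiv ℝ (dIter k (fun i => u i.succ) (fun i => β i.succ) f) x' (u 0) := by
        rw [dIter_succ]; simp [h]
      have e2 : (fun x' => fderiv ℝ (dIter k (fun i => u i.succ) (fun i => β i.succ) f) x' (u 0))
          = dIter k (fun i => u i.succ) (fun i => β i.succ) (fun y => fderiv ℝ f y (u 0)) := by
        funext x'; exact dIter_comm k _ _ f hf1 x' (u 0)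
      have e3 : dIter (k+1) u β (fun y => fderiv ℝ f y z)
          = fun x' => fderiv ℝ
              (dIter k (fun i => u i.succ) (fun i => β i.succ) (fun y => fderiv ℝ f y z)) x' (u 0) := by
        rw [dIter_succ]; simp [h]
      have sch : (fun y => fderiv ℝ (fun y' => fderiv ℝ f y' (u 0)) y z)
          = (fun y => fderiv ℝ (fun y' => fderiv ℝ f y' z) y (u 0)) := by
        funext y
        exact schwarz (hf.of_le (by exact_mod_cast (by omega : (2:ℕ) ≤ k+1+1))) y (u 0) z
      rw [e1, e2, dIter_comm k _ _ _ hfu x z, e3]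
      beta_reduce
      rw [dIter_comm k _ _ _ hfz x (u 0), sch]

end helpers

section tsm
variable {X Y : Type*} [NormedAddCommGroup X] [NormedSpace ℝ X]
    [NormedAddCommGroup Y] [NormedSpace ℝ Y]

lemma tsm_contDiff :
    ∀ (k : ℕ) (n : ℕ) (f : X → Y), ContDiff ℝ ((n + k : ℕ) : ℕ∞) f →
      ContDiff ℝ ((n : ℕ) : ℕ∞) (Tsm k f)
  | 0, n, f, hf => by
    have hf' : ContDiff ℝ ((n:ℕ):ℕ∞) f := by
      have : n + 0 = n := rfl
      rwa [this] at hf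
    exact contDiff_pi.2 fun α =>
      hf'.comp (ContinuousLinearMap.proj (R := ℝ) (φ := fun _ : Fin 0 → Bool => X) α).contDiff
  | k+1, n, f, hf => by
    have hf' : ContDiff ℝ (((n+1) + k : ℕ) : ℕ∞) f := by
      have : (n+1) + k = n + (k+1) := by omega
      rwa [this]
    have hT : ContDiff ℝ ((n+1 : ℕ):ℕ∞) (Tsm k f) := tsm_contDiff k (n+1) f hf'
    set L : ((Fin (k+1) → Bool) → X) →L[ℝ] ((Fin k → Bool) → X) :=
      ContinuousLinearMap.pi (fun α => ContinuousLinearMap.proj (Fin.snoc α false)) with hL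
    set M : ((Fin (k+1) → Bool) → X) →L[ℝ] ((Fin k → Bool) → X) :=
      ContinuousLinearMap.pi (fun α => ContinuousLinearMap.proj (Fin.snoc α true)) with hM
    have hTsm : Tsm (k+1) f
        = fun w => pairCub (Tsm k f (L w)) (fderiv ℝ (Tsm k f) (L w) (M w)) := rfl
    rw [hTsm]
    apply contDiff_pi.2
    intro β
    by_cases hβ : β (Fin.last k) = true
    · have e : (fun w => pairCub (Tsm k f (L w)) (fderiv ℝ (Tsm k f) (L w) (M w)) β)
          = fun w => fderiv ℝ (Tsm k f) (L w) (M w) (β ∘ Fin.castSucc) := by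
        funext w; simp [pairCub, hβ]
      rw [e]
      have h1 : ContDiff ℝ ((n:ℕ):ℕ∞) (fun w => fderiv ℝ (Tsm k f) (L w)) :=
        (hT.fderiv_right (by exact_mod_cast le_rfl)).comp L.contDiff
      exact contDiff_pi.1 (h1.clm_apply M.contDiff) _
    · have e : (fun w => pairCub (Tsm k f (L w)) (fderiv ℝ (Tsm k f) (L w) (M w)) β)
          = fun w => Tsm k f (L w) (β ∘ Fin.castSucc) := by
        funext w; simp [pairCub, hβ]
      rw [e]
      have h1 : ContDiff ℝ ((n:ℕ):ℕ∞) (fun w => Tsm k f (L w)) :=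
        (hT.of_le (by exact_mod_cast Nat.le_succ n)).comp L.contDiff
      exact contDiff_pi.1 h1 _
end tsm
section angle
variable {X : Type*} [AddCommGroup X] {k : ℕ}

lemma angleCub_snoc_false (x : X) (u : Fin (k+1) → X) :
    (fun α : Fin k → Bool => angleCub x u (Fin.snoc α false))
      = angleCub x (fun i => u i.castSucc) := by
  funext α
  unfold angleCub
  have hcond : (∀ j, (Fin.snoc α false : Fin (k+1) → Bool) j = false) ↔ (∀ j, α j = false) := by
    constructor
    · intro h j; have := h j.castSucc; rwa [Fin.snoc_castSucc] at this
    · intro h j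
      refine Fin.lastCases ?_ ?_ j
      · simp
      · intro i; simp [Fin.snoc_castSucc, h i]
  congr 1
  · simp only [hcond]
  · rw [Fin.sum_univ_castSucc]
    have hlast : ¬ (Fin.snoc α false = fun j : Fin (k+1) => decide (j = Fin.last k)) := by
      intro hc
      have := congrFun hc (Fin.last k)
      simp at this
    have hcs : ∀ i : Fin k,
        (Fin.snoc α false = fun j : Fin (k+1) => decide (j = i.castSucc))
          ↔ (α = fun j => decide (j = i)) := by
      intro i
      constructor
      · intro hc; funext j
        have := congrFun hc j.castSucc
        rw [Fin.snoc_castSucc] at this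
        simpa [Fin.castSucc_inj] using this
      · intro hc; funext j
        refine Fin.lastCases ?_ ?_ j
        · simp [Fin.snoc_last, (Fin.castSucc_lt_last i).ne']
        · intro m
          rw [Fin.snoc_castSucc, congrFun hc m]
          simp [Fin.castSucc_inj]
    simp only [hlast, if_false, hcs]
    simp

lemma angleCub_snoc_true (x : X) (u : Fin (k+1) → X) :
    (fun α : Fin k → Bool => angleCub x u (Fin.snoc α true))
      = angleCub (u (Fin.last k)) (fun _ => (0:X)) := by
  funext α
  unfold angleCub
  have hcond : ¬ (∀ j, (Fin.snoc α true : Fin (k+1) → Bool) j = false) := by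
    intro h; have := h (Fin.last k); simp at this
  have hcs : ∀ i : Fin k,
      ¬ (Fin.snoc α true = fun j : Fin (k+1) => decide (j = i.castSucc)) := by
    intro i hc
    have := congrFun hc (Fin.last k)
    simp [(Fin.castSucc_lt_last i).ne'] at this
  have hlast : (Fin.snoc α true = fun j : Fin (k+1) => decide (j = Fin.last k))
      ↔ (∀ j, α j = false) := by
    constructor
    · intro hc j
      have := congrFun hc j.castSucc
      rw [Fin.snoc_castSucc] at this
      simpa [(Fin.castSucc_lt_last j).ne] using this
    · intro h; funext j
      refine Fin.lastCases ?_ ?_ j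
      · simp
      · intro m; simp [Fin.snoc_castSucc, h m, (Fin.castSucc_lt_last m).ne]
  rw [Fin.sum_univ_castSucc]
  simp only [hcond, if_false, hcs, hlast]
  by_cases hb : ∀ j, α j = false
  · simp [hb]
  · simp [hb]

lemma angleCub_const_zero (z : X) (α : Fin k → Bool) :
    angleCub z (fun _ => (0:X)) α = if ∀ j, α j = false then z else 0 := by
  unfold angleCub; simp

end angle

section base
variable (X : Type*) [NormedAddCommGroup X] [NormedSpace ℝ X] (k : ℕ)

noncomputable def baseCLM : X →L[ℝ] ((Fin k → Bool) → X) :=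
  ContinuousLinearMap.pi
    (fun α => if ∀ j, α j = false then ContinuousLinearMap.id ℝ X else 0)

variable {X k}

lemma baseCLM_apply (v : X) (α : Fin k → Bool) :
    baseCLM X k v α = if ∀ j, α j = false then v else 0 := by
  unfold baseCLM
  rw [ContinuousLinearMap.pi_apply]
  by_cases hb : ∀ j, α j = false
  · simp [hb]
  · simp [hb]

lemma angleCub_eq_base (y : X) (u : Fin k → X) :
    (fun α => angleCub y u α) = fun α => angleCub (0:X) u α + baseCLM X k y α := by
  funext α
  rw [baseCLM_apply]
  by_cases hb : ∀ j, α j = false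
  · simp [angleCub, hb]; abel
  · simp [angleCub, hb]

end base


/-- Components of the smooth iterated tangent map: if `f` is `C^k`, the component of
`T^k(f)(⟨⟨x; u⟩⟩)` at the multi-index `α ∈ {0,1}^k` equals `D_u^α f(x)`. -/
theorem Tsm_angle {X Y : Type*}
    [NormedAddCommGroup X] [NormedSpace ℝ X] [FiniteDimensional ℝ X]
    [NormedAddCommGroup Y] [NormedSpace ℝ Y] [FiniteDimensional ℝ Y]
    (k : ℕ) (f : X → Y) (hf : ContDiff ℝ (k : ℕ∞) f)
    (x : X) (u : Fin k → X) (α : Fin k → Bool) :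
    Tsm k f (angleCub x u) α = dIter k u α f x := by
  induction k generalizing f x with
  | zero =>
    have hx : angleCub x u α = x := by
      simp [angleCub]
    show f (angleCub x u α) = f x
    rw [hx]
  | succ k ih =>
    set u' : Fin k → X := fun i => u i.castSucc with hu'
    set β' : Fin k → Bool := fun i => α i.castSucc with hβ'
    set Δ : (Fin k → Bool) → X := angleCub (u (Fin.last k)) (fun _ => (0:X)) with hΔ
    set W : (Fin k → Bool) → X := angleCub x u' with hW
    have hfk : ContDiff ℝ ((k:ℕ):ℕ∞) f := hf.of_le (by exact_mod_cast Nat.le_succ k)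
    have hfk1 : ContDiff ℝ ((k+1:ℕ):ℕ∞) f := hf
    have hwf : (fun γ : Fin k → Bool => angleCub x u (Fin.snoc γ false)) = W :=
      angleCub_snoc_false x u
    have hT : Tsm (k+1) f (angleCub x u) α
        = pairCub (Tsm k f W) (fderiv ℝ (Tsm k f) W Δ) α := by
      show pairCub (Tsm k f (fun γ => angleCub x u (Fin.snoc γ false)))
          (fderiv ℝ (Tsm k f) (fun γ => angleCub x u (Fin.snoc γ false))
            (fun γ => angleCub x u (Fin.snoc γ true))) α = _
      rw [hwf, angleCub_snoc_true]
    rw [hT, dIter_succ_last k u α f x]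
    by_cases hα : α (Fin.last k) = true
    · simp only [pairCub, hα, if_true]
      -- differentiability of Tsm k f at W
      have hf1k : ContDiff ℝ ((1 + k : ℕ):ℕ∞) f := by
        have : 1 + k = k + 1 := by omega
        rw [this]; exact hfk1
      have hT1 : ContDiff ℝ ((1:ℕ):ℕ∞) (Tsm k f) := tsm_contDiff k 1 f hf1k
      have hdiff : DifferentiableAt ℝ (Tsm k f) W :=
        (hT1.differentiable (by norm_num)).differentiableAt
      set P := ContinuousLinearMap.proj (R := ℝ) (φ := fun _ : Fin k → Bool => Y)
        (α ∘ Fin.castSucc) with hP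
      set D := fderiv ℝ (Tsm k f) W with hD
      have hEv : HasFDerivAt (fun w => Tsm k f w (α ∘ Fin.castSucc)) (P.comp D) W :=
        P.hasFDerivAt.comp W hdiff.hasFDerivAt
      set B := baseCLM X k with hB
      have haff : HasFDerivAt (fun y => angleCub y u') B x := by
        have he : (fun y : X => angleCub y u') = fun y => (angleCub (0:X) u' + B y) := by
          funext y; exact angleCub_eq_base y u'
        rw [he]
        exact B.hasFDerivAt.const_add (angleCub (0:X) u')
      have hchain : HasFDerivAt (fun y => Tsm k f (angleCub y u') (α ∘ Fin.castSucc))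
          ((P.comp D).comp B) x :=
        HasFDerivAt.comp (g := fun w => Tsm k f w (α ∘ Fin.castSucc)) x hEv haff
      have hGfun : (fun y => Tsm k f (angleCub y u') (α ∘ Fin.castSucc))
          = dIter k u' β' f := by
        funext y; exact ih f hfk y u' β'
      rw [hGfun] at hchain
      have hBu : B (u (Fin.last k)) = Δ := by
        funext γ
        rw [hB, baseCLM_apply, hΔ, angleCub_const_zero]
      have e5 : fderiv ℝ (dIter k u' β' f) x (u (Fin.last k)) = D Δ (α ∘ Fin.castSucc) := by
        rw [hchain.fderiv]
        simp only [ContinuousLinearMap.comp_apply, ContinuousLinearMap.proj_apply, hBu]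
        rfl
      rw [dIter_comm k u' β' f hfk1 x (u (Fin.last k))] at e5
      rw [← e5]
    · simp only [pairCub, hα, if_false, Bool.false_eq_true]
      exact ih f hfk x u' (α ∘ Fin.castSucc)
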